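/- Given a ranked tree shape with n leaves and k cherries, there are exactly n!/2^k ranked phylogenetic trees (leaf-labeled ranked trees) mapped to it by the map that forgets leaf labels. -/

import Mathlib

/-- A rooted binary tree with ordered (left/right) children. -/
inductive OTree : Type
  | leaf : OTree
  | node : OTree → OTree → OTree
deriving DecidableEq

/-- Number of leaves. -/
def OTree.nLeaves : OTree → ℕ
  | .leaf => 1
  | .node l r => l.nLeaves + r.nLeaves

/-- Number of internal nodes. -/
def OTree.nInt : OTree → ℕ
  | .leaf => 0
  | .node l r => l.nInt + r.nInt + 1

/-- `t.isInt p` : the path `p` (`true` = left) leads to an internal node of `t`. -/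
def OTree.isInt : OTree → List Bool → Prop
  | .leaf, _ => False
  | .node _ _, [] => True
  | .node l _, true :: p => l.isInt p
  | .node _ r, false :: p => r.isInt p

/-- `t.isLf p` : the path `p` leads to a leaf of `t`. -/
def OTree.isLf : OTree → List Bool → Prop
  | .leaf, [] => True
  | .leaf, _ :: _ => False
  | .node _ _, [] => False
  | .node l _, true :: p => l.isLf p
  | .node _ r, false :: p => r.isLf p

/-- A ranking of the internal nodes of `t`: a bijection to `{1,…,n-1}` (here `Fin t.nInt`)
which strictly increases along every root-to-leaf path. -/
structure Ranking (t : OTree) where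
  rk : {p : List Bool // t.isInt p} → Fin t.nInt
  bij : Function.Bijective rk
  mono : ∀ p q : {p : List Bool // t.isInt p}, p.1 <+: q.1 → p.1 ≠ q.1 → rk p < rk q

/-- A ranked oriented tree. -/
def RankedOTree := Σ t : OTree, Ranking t

/-- Reorient a tree by swapping the two children at every position `p` with `σ p = true`. -/
def OTree.reorient (σ : List Bool → Bool) : OTree → OTree
  | .leaf => .leaf
  | .node l r =>
    let l' := l.reorient (fun p => σ (true :: p))
    let r' := r.reorient (fun p => σ (false :: p))
    if σ [] then .node r' l' else .node l' r'

/-- The induced map on paths: position `p` of `t` corresponds to `pmap σ p` of `t.reorient σ`. -/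
def pmap (σ : List Bool → Bool) : List Bool → List Bool
  | [] => []
  | b :: p => (xor b (σ [])) :: pmap (fun q => σ (b :: q)) p

/-- Two ranked oriented trees have the same ranked tree shape: some reorientation sends one to
the other, matching ranks. -/
def ShapeRel (x y : RankedOTree) : Prop :=
  ∃ σ : List Bool → Bool, y.1 = x.1.reorient σ ∧
    ∀ (p : {p : List Bool // x.1.isInt p}) (h : y.1.isInt (pmap σ p.1)),
      (y.2.rk ⟨pmap σ p.1, h⟩ : ℕ) = (x.2.rk p : ℕ)

/-- Number of cherries (internal nodes whose two children are both leaves). -/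
def OTree.nCherries : OTree → ℕ
  | .leaf => 0
  | .node .leaf .leaf => 1
  | .node l r => l.nCherries + r.nCherries

/-- A ranked phylogenetic tree, presented as an oriented representative: a ranked oriented tree
together with distinct leaf labels (a bijection from leaf positions to `Fin n`). -/
structure PhyloT where
  tree : OTree
  rank : Ranking tree
  lab : {p : List Bool // tree.isLf p} ≃ Fin tree.nLeaves

/-- Two labeled ranked oriented trees represent the same ranked phylogenetic tree:
some reorientation matches them, preserving ranks and leaf labels. -/
def PhyloRel (x y : PhyloT) : Prop :=
  ∃ σ : List Bool → Bool, y.tree = x.tree.reorient σ ∧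
    (∀ (p : {p : List Bool // x.tree.isInt p}) (h : y.tree.isInt (pmap σ p.1)),
      (y.rank.rk ⟨pmap σ p.1, h⟩ : ℕ) = (x.rank.rk p : ℕ)) ∧
    (∀ (p : {p : List Bool // x.tree.isLf p}) (h : y.tree.isLf (pmap σ p.1)),
      (y.lab ⟨pmap σ p.1, h⟩ : ℕ) = (x.lab p : ℕ))

/-- Ranked phylogenetic trees: labeled oriented representatives up to reorientation. -/
def PhyloTree := Quotient (Relation.EqvGen.setoid PhyloRel)

namespace Stmt2Aux
open OTree Relation

/-! ### Decidability -/

instance decIsInt : ∀ (t : OTree) (p : List Bool), Decidable (t.isInt p)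
  | .leaf, _ => .isFalse (fun h => h)
  | .node _ _, [] => .isTrue trivial
  | .node l _, true :: p => decIsInt l p
  | .node _ r, false :: p => decIsInt r p

instance decIsLf : ∀ (t : OTree) (p : List Bool), Decidable (t.isLf p)
  | .leaf, [] => .isTrue trivial
  | .leaf, _ :: _ => .isFalse (fun h => h)
  | .node _ _, [] => .isFalse (fun h => h)
  | .node l _, true :: p => decIsLf l p
  | .node _ r, false :: p => decIsLf r p

/-- A cherry position. -/
def OTree.isCherry (t : OTree) (p : List Bool) : Prop :=
  t.isInt p ∧ t.isLf (p ++ [true]) ∧ t.isLf (p ++ [false])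

instance decIsCherry (t : OTree) (p : List Bool) : Decidable (OTree.isCherry t p) :=
  inferInstanceAs (Decidable (_ ∧ _ ∧ _))

/-! ### Position lemmas -/

lemma isInt_prefix : ∀ (q : List Bool) (t : OTree) (p : List Bool),
    t.isInt p → q <+: p → t.isInt q
  | [], t, p, h, _ => by
      cases t with
      | leaf => exact h
      | node l r => trivial
  | b :: q, t, p, h, hq => by
      obtain ⟨s, rfl⟩ := hq
      cases t with
      | leaf => exact h
      | node l r =>
        cases b with
        | true => exact isInt_prefix q l (q ++ s) h ⟨s, rfl⟩
        | false => exact isInt_prefix q r (q ++ s) h ⟨s, rfl⟩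

lemma isInt_of_prefix_isLf : ∀ (q : List Bool) (t : OTree) (p : List Bool),
    t.isLf p → q <+: p → q ≠ p → t.isInt q
  | [], t, p, h, _, hne => by
      cases t with
      | leaf =>
        cases p with
        | nil => exact absurd rfl hne
        | cons b p => exact h
      | node l r => trivial
  | b :: q, t, p, h, hq, hne => by
      obtain ⟨s, rfl⟩ := hq
      cases t with
      | leaf =>
        cases h
      | node l r =>
        have hne' : q ≠ q ++ s := by
          intro he; exact hne (congrArg (b :: ·) he)
        cases b with
        | true => exact isInt_of_prefix_isLf q l (q ++ s) h ⟨s, rfl⟩ hne'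
        | false => exact isInt_of_prefix_isLf q r (q ++ s) h ⟨s, rfl⟩ hne'

lemma not_isInt_isLf : ∀ (p : List Bool) (t : OTree), t.isInt p → t.isLf p → False
  | p, .leaf, h, _ => h
  | [], .node _ _, _, h2 => h2
  | true :: p, .node l r, h1, h2 => not_isInt_isLf p l h1 h2
  | false :: p, .node l r, h1, h2 => not_isInt_isLf p r h1 h2

lemma cherry_child_isLf {t : OTree} {q : List Bool} (h : OTree.isCherry t q) (b : Bool) :
    t.isLf (q ++ [b]) := by
  cases b
  · exact h.2.2
  · exact h.2.1

lemma not_cherry_of_proper_prefix {t : OTree} {p q : List Bool}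
    (hp : t.isInt p) (hq : q <+: p) (hne : q ≠ p) : ¬ OTree.isCherry t q := by
  intro hc
  obtain ⟨s, rfl⟩ := hq
  cases s with
  | nil => exact hne (by simp)
  | cons b s =>
    have hlf : t.isLf (q ++ [b]) := cherry_child_isLf hc b
    have hint : t.isInt (q ++ [b]) :=
      isInt_prefix _ _ _ hp ⟨s, by simp⟩
    exact not_isInt_isLf _ _ hint hlf

lemma exists_int_child_of_not_cherry : ∀ (q : List Bool) (t : OTree),
    t.isInt q → ¬ OTree.isCherry t q → ∃ b, t.isInt (q ++ [b])
  | q, .leaf, h, _ => absurd h id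
  | [], .node l r, _, hnc => by
      cases l with
      | leaf =>
        cases r with
        | leaf => exact absurd ⟨trivial, trivial, trivial⟩ hnc
        | node a b => exact ⟨false, trivial⟩
      | node a b => exact ⟨true, trivial⟩
  | true :: q, .node l r, h, hnc => by
      have := exists_int_child_of_not_cherry q l h (fun hc => hnc ⟨hc.1, hc.2.1, hc.2.2⟩)
      obtain ⟨b, hb⟩ := this
      exact ⟨b, hb⟩
  | false :: q, .node l r, h, hnc => by
      have := exists_int_child_of_not_cherry q r h (fun hc => hnc ⟨hc.1, hc.2.1, hc.2.2⟩)
      obtain ⟨b, hb⟩ := this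
      exact ⟨b, hb⟩

end Stmt2Aux
namespace Stmt2Aux
open OTree Relation

/-! ### Reorientation algebra -/

/-- Composition of reorientations. -/
def compSig (σ τ : List Bool → Bool) : List Bool → Bool
  | [] => xor (σ []) (τ [])
  | b :: p => compSig (fun q => σ (b :: q)) (fun q => τ (xor b (σ []) :: q)) p

/-- Inverse of a reorientation. -/
def invSig (σ : List Bool → Bool) : List Bool → Bool
  | [] => σ []
  | b :: p => invSig (fun q => σ (xor b (σ []) :: q)) p

lemma reorient_comp (σ τ : List Bool → Bool) : ∀ t : OTree,
    (t.reorient σ).reorient τ = t.reorient (compSig σ τ)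
  | .leaf => rfl
  | .node l r => by
    have ihl := fun σ' τ' => reorient_comp σ' τ' l
    have ihr := fun σ' τ' => reorient_comp σ' τ' r
    show ((OTree.node l r).reorient σ).reorient τ = _
    simp only [OTree.reorient]
    cases hσ : σ [] <;> cases hτ : τ [] <;>
      simp_all [OTree.reorient, compSig, ihl, ihr]

lemma pmap_comp (σ τ : List Bool → Bool) : ∀ p : List Bool,
    pmap (compSig σ τ) p = pmap τ (pmap σ p)
  | [] => rfl
  | b :: p => by
    simp only [pmap, compSig, pmap_comp]
    congr 1
    simp [Bool.xor_assoc]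

lemma invSig_cons (σ : List Bool → Bool) (b : Bool) :
    (fun q => invSig σ ((xor b (σ [])) :: q)) = invSig (fun q => σ (b :: q)) := by
  have hb : xor (xor b (σ [])) (σ []) = b := by simp [Bool.xor_assoc]
  funext q
  show invSig (fun q' => σ ((xor (xor b (σ [])) (σ [])) :: q')) q = _
  simp only [hb]

lemma invSig_invSig (σ : List Bool → Bool) : ∀ p : List Bool, invSig (invSig σ) p = σ p
  | [] => rfl
  | c :: p => by
    show invSig (fun q => invSig σ (xor c (σ []) :: q)) p = σ (c :: p)
    rw [invSig_cons σ c, invSig_invSig]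

lemma invSig_eq (σ : List Bool → Bool) : invSig (invSig σ) = σ :=
  funext (invSig_invSig σ)

lemma reorient_invSig (σ : List Bool → Bool) : ∀ t : OTree,
    (t.reorient σ).reorient (invSig σ) = t
  | .leaf => rfl
  | .node l r => by
    have ihl := fun σ' => reorient_invSig σ' l
    have ihr := fun σ' => reorient_invSig σ' r
    show ((OTree.node l r).reorient σ).reorient (invSig σ) = _
    simp only [OTree.reorient]
    cases hσ : σ [] <;> simp_all [OTree.reorient, invSig, hσ]

lemma reorient_invSig' (σ : List Bool → Bool) (t : OTree) :
    (t.reorient (invSig σ)).reorient σ = t := by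
  have h := reorient_invSig (invSig σ) t
  rwa [invSig_eq] at h

lemma pmap_invSig (σ : List Bool → Bool) : ∀ p : List Bool, pmap (invSig σ) (pmap σ p) = p
  | [] => rfl
  | b :: p => by
    simp only [pmap]
    congr 1
    · show xor (xor b (σ [])) (σ []) = b
      simp [Bool.xor_assoc]
    · show pmap (fun q => invSig σ ((xor b (σ [])) :: q)) (pmap (fun q => σ (b :: q)) p) = p
      rw [invSig_cons]
      exact pmap_invSig _ p

lemma pmap_invSig' (σ : List Bool → Bool) (p : List Bool) :
    pmap σ (pmap (invSig σ) p) = p := by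
  have h := pmap_invSig (invSig σ) p
  rwa [invSig_eq] at h

end Stmt2Aux
namespace Stmt2Aux
open OTree Relation

/-! ### Transport of positions under reorientation -/

lemma isInt_reorient (σ : List Bool → Bool) : ∀ (p : List Bool) (t : OTree),
    t.isInt p → (t.reorient σ).isInt (pmap σ p)
  | [], .leaf, h => h.elim
  | [], .node l r, _ => by
    show ((OTree.node l r).reorient σ).isInt []
    simp only [OTree.reorient]
    cases σ [] <;> trivial
  | b :: p, .leaf, h => h.elim
  | b :: p, .node l r, h => by
    show ((OTree.node l r).reorient σ).isInt (pmap σ (b :: p))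
    simp only [OTree.reorient, pmap]
    cases hσ : σ [] <;> cases b <;>
      simpa [OTree.isInt] using isInt_reorient _ p _ h

lemma isLf_reorient (σ : List Bool → Bool) : ∀ (p : List Bool) (t : OTree),
    t.isLf p → (t.reorient σ).isLf (pmap σ p)
  | [], .leaf, _ => trivial
  | [], .node l r, h => h.elim
  | b :: p, .leaf, h => h.elim
  | b :: p, .node l r, h => by
    show ((OTree.node l r).reorient σ).isLf (pmap σ (b :: p))
    simp only [OTree.reorient, pmap]
    cases hσ : σ [] <;> cases b <;>
      simpa [OTree.isLf] using isLf_reorient _ p _ h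

lemma isInt_reorient_iff (σ : List Bool → Bool) (p : List Bool) (t : OTree) :
    (t.reorient σ).isInt (pmap σ p) ↔ t.isInt p := by
  refine ⟨fun h => ?_, isInt_reorient σ p t⟩
  have h2 := isInt_reorient (invSig σ) (pmap σ p) (t.reorient σ) h
  rwa [reorient_invSig, pmap_invSig] at h2

lemma isLf_reorient_iff (σ : List Bool → Bool) (p : List Bool) (t : OTree) :
    (t.reorient σ).isLf (pmap σ p) ↔ t.isLf p := by
  refine ⟨fun h => ?_, isLf_reorient σ p t⟩
  have h2 := isLf_reorient (invSig σ) (pmap σ p) (t.reorient σ) h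
  rwa [reorient_invSig, pmap_invSig] at h2

/-! ### Locality lemmas -/

lemma pmap_congr : ∀ (p : List Bool) (σ τ : List Bool → Bool),
    (∀ q, q <+: p → q ≠ p → σ q = τ q) → pmap σ p = pmap τ p
  | [], _, _, _ => rfl
  | b :: p, σ, τ, h => by
    have h0 : σ [] = τ [] := h [] ⟨b :: p, rfl⟩ (by simp)
    simp only [pmap, h0]
    congr 1
    exact pmap_congr p _ _ fun q hq hne =>
      h (b :: q) (by simpa using hq) (by simpa using hne)

lemma pmap_const_false : ∀ p : List Bool, pmap (fun _ => false) p = p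
  | [] => rfl
  | b :: p => by simp only [pmap, Bool.xor_false]; exact congrArg _ (pmap_const_false p)

lemma pmap_fix {p : List Bool} {σ : List Bool → Bool}
    (h : ∀ q, q <+: p → q ≠ p → σ q = false) : pmap σ p = p := by
  rw [pmap_congr p σ (fun _ => false) h, pmap_const_false]

lemma pmap_append_single : ∀ (p : List Bool) (σ : List Bool → Bool) (b : Bool),
    pmap σ p = p → pmap σ (p ++ [b]) = p ++ [xor b (σ p)]
  | [], σ, b, _ => rfl
  | a :: p, σ, b, h => by
    simp only [pmap, List.cons_append, List.cons.injEq] at h ⊢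
    obtain ⟨h1, h2⟩ := h
    refine ⟨h1, ?_⟩
    exact pmap_append_single p _ b h2

/-- Reorienting only at cherries leaves the tree unchanged. -/
lemma reorient_cherries : ∀ (t : OTree) (σ : List Bool → Bool),
    (∀ q, t.isInt q → ¬ OTree.isCherry t q → σ q = false) → t.reorient σ = t
  | .leaf, _, _ => rfl
  | .node .leaf .leaf, σ, _ => by
    show OTree.reorient σ (.node .leaf .leaf) = _
    simp only [OTree.reorient]
    cases σ [] <;> rfl
  | .node l r, σ, h => by
    have hnc : ¬ OTree.isCherry (OTree.node l r) [] → σ [] = false := h [] trivial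
    show OTree.reorient σ (.node l r) = _
    simp only [OTree.reorient]
    have hl : l.reorient (fun p => σ (true :: p)) = l :=
      reorient_cherries l _ fun q hq hnc' =>
        h (true :: q) hq (fun hc => hnc' ⟨hc.1, hc.2.1, hc.2.2⟩)
    have hr : r.reorient (fun p => σ (false :: p)) = r :=
      reorient_cherries r _ fun q hq hnc' =>
        h (false :: q) hq (fun hc => hnc' ⟨hc.1, hc.2.1, hc.2.2⟩)
    by_cases hcl : OTree.isCherry (OTree.node l r) []
    · -- both children are leaves
      have hll : l = .leaf := by
        cases l with
        | leaf => rfl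
        | node a b => exact absurd hcl.2.1 (fun h => h)
      have hrr : r = .leaf := by
        cases r with
        | leaf => rfl
        | node a b => exact absurd hcl.2.2 (fun h => h)
      subst hll; subst hrr
      cases hσ : σ [] <;> simp [hσ] <;> exact ⟨hr, hl⟩
    · rw [hnc hcl, if_neg (by simp), hl, hr]

lemma nLeaves_reorient (σ : List Bool → Bool) : ∀ t : OTree,
    (t.reorient σ).nLeaves = t.nLeaves
  | .leaf => rfl
  | .node l r => by
    show (OTree.reorient σ (.node l r)).nLeaves = _
    simp only [OTree.reorient]
    cases σ [] <;> simp [OTree.nLeaves, nLeaves_reorient _ l, nLeaves_reorient _ r] <;> omega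

end Stmt2Aux
namespace Stmt2Aux
open OTree Relation

/-! ### Counting leaves and cherries -/

def leafSplit (l r : OTree) : {p : List Bool // (OTree.node l r).isLf p} ≃
    {p : List Bool // l.isLf p} ⊕ {p : List Bool // r.isLf p} where
  toFun := fun x => match x with
    | ⟨[], h⟩ => h.elim
    | ⟨true :: q, h⟩ => Sum.inl ⟨q, h⟩
    | ⟨false :: q, h⟩ => Sum.inr ⟨q, h⟩
  invFun := fun s => match s with
    | .inl ⟨q, h⟩ => ⟨true :: q, h⟩
    | .inr ⟨q, h⟩ => ⟨false :: q, h⟩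
  left_inv := fun x => match x with
    | ⟨[], h⟩ => h.elim
    | ⟨true :: q, h⟩ => rfl
    | ⟨false :: q, h⟩ => rfl
  right_inv := fun s => match s with
    | .inl ⟨q, h⟩ => rfl
    | .inr ⟨q, h⟩ => rfl

def leafFinEquiv : (t : OTree) → {p : List Bool // t.isLf p} ≃ Fin t.nLeaves
  | .leaf =>
    { toFun := fun _ => ⟨0, Nat.one_pos⟩
      invFun := fun _ => ⟨[], trivial⟩
      left_inv := fun x => match x with
        | ⟨[], h⟩ => rfl
        | ⟨b :: q, h⟩ => h.elim
      right_inv := fun i => by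
        have : Subsingleton (Fin OTree.leaf.nLeaves) := by
          show Subsingleton (Fin 1); infer_instance
        exact Subsingleton.elim _ _ }
  | .node l r =>
    (leafSplit l r).trans
      (((leafFinEquiv l).sumCongr (leafFinEquiv r)).trans finSumFinEquiv)

def cherrySplit (l r : OTree) (hnc : ¬ OTree.isCherry (OTree.node l r) []) :
    {p : List Bool // OTree.isCherry (OTree.node l r) p} ≃
    {p : List Bool // OTree.isCherry l p} ⊕ {p : List Bool // OTree.isCherry r p} where
  toFun := fun x => match x with
    | ⟨[], h⟩ => absurd h hnc
    | ⟨true :: q, h⟩ => Sum.inl ⟨q, ⟨h.1, h.2.1, h.2.2⟩⟩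
    | ⟨false :: q, h⟩ => Sum.inr ⟨q, ⟨h.1, h.2.1, h.2.2⟩⟩
  invFun := fun s => match s with
    | .inl ⟨q, h⟩ => ⟨true :: q, ⟨h.1, h.2.1, h.2.2⟩⟩
    | .inr ⟨q, h⟩ => ⟨false :: q, ⟨h.1, h.2.1, h.2.2⟩⟩
  left_inv := fun x => match x with
    | ⟨[], h⟩ => absurd h hnc
    | ⟨true :: q, h⟩ => rfl
    | ⟨false :: q, h⟩ => rfl
  right_inv := fun s => match s with
    | .inl ⟨q, h⟩ => rfl
    | .inr ⟨q, h⟩ => rfl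

def cherryNotLeaf : {p : List Bool // OTree.isCherry OTree.leaf p} ≃ Fin 0 where
  toFun := fun x => absurd x.2.1 (fun h => h)
  invFun := fun i => absurd i.2 (by omega)
  left_inv := fun x => absurd x.2.1 (fun h => h)
  right_inv := fun i => absurd i.2 (by omega)

def cherryFinEquiv : (t : OTree) → {p : List Bool // OTree.isCherry t p} ≃ Fin t.nCherries
  | .leaf => cherryNotLeaf
  | .node .leaf .leaf =>
    { toFun := fun _ => ⟨0, by simp [OTree.nCherries]⟩
      invFun := fun _ => ⟨[], ⟨trivial, trivial, trivial⟩⟩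
      left_inv := fun x => match x with
        | ⟨[], h⟩ => rfl
        | ⟨true :: q, h⟩ => absurd h.1 (fun h' => h')
        | ⟨false :: q, h⟩ => absurd h.1 (fun h' => h')
      right_inv := fun i => by
        have : Subsingleton (Fin (OTree.node .leaf .leaf).nCherries) := by
          have h1 : (OTree.node .leaf .leaf).nCherries = 1 := by simp [OTree.nCherries]
          rw [h1]; infer_instance
        exact Subsingleton.elim _ _ }
  | .node .leaf (.node a b) =>
    ((cherrySplit .leaf (.node a b) (fun h => h.2.2)).trans
      (((cherryFinEquiv .leaf).sumCongr (cherryFinEquiv (.node a b))).trans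
        finSumFinEquiv)).trans (finCongr (by simp [OTree.nCherries]))
  | .node (.node a b) .leaf =>
    ((cherrySplit (.node a b) .leaf (fun h => h.2.1)).trans
      (((cherryFinEquiv (.node a b)).sumCongr (cherryFinEquiv .leaf)).trans
        finSumFinEquiv)).trans (finCongr (by simp [OTree.nCherries]))
  | .node (.node a b) (.node c d) =>
    ((cherrySplit (.node a b) (.node c d) (fun h => h.2.1)).trans
      (((cherryFinEquiv (.node a b)).sumCongr (cherryFinEquiv (.node c d))).trans
        finSumFinEquiv)).trans (finCongr (by simp [OTree.nCherries]))

end Stmt2Aux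
namespace Stmt2Aux
open OTree Relation

/-! ### PhyloRel and ShapeRel are equivalences -/

lemma reorient_const_false (t : OTree) : t.reorient (fun _ => false) = t :=
  reorient_cherries t _ (fun _ _ _ => rfl)

lemma phyloRel_refl (a : PhyloT) : PhyloRel a a := by
  refine ⟨fun _ => false, (reorient_const_false a.tree).symm, ?_, ?_⟩
  · intro p h
    have he : (⟨pmap (fun _ => false) p.1, h⟩ : {q : List Bool // a.tree.isInt q}) = p :=
      Subtype.ext (pmap_const_false p.1)
    rw [he]
  · intro p h
    have he : (⟨pmap (fun _ => false) p.1, h⟩ : {q : List Bool // a.tree.isLf q}) = p :=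
      Subtype.ext (pmap_const_false p.1)
    rw [he]

lemma phyloRel_symm {a b : PhyloT} (h : PhyloRel a b) : PhyloRel b a := by
  obtain ⟨σ, htree, hrank, hlab⟩ := h
  refine ⟨invSig σ, by rw [htree, reorient_invSig], ?_, ?_⟩
  · intro p h
    have hps : pmap σ (pmap (invSig σ) p.1) = p.1 := pmap_invSig' σ p.1
    have h' : b.tree.isInt (pmap σ (pmap (invSig σ) p.1)) := by rw [hps]; exact p.2
    have := hrank ⟨pmap (invSig σ) p.1, h⟩ h'
    have he : (⟨pmap σ (pmap (invSig σ) p.1), h'⟩ : {q : List Bool // b.tree.isInt q}) = p :=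
      Subtype.ext hps
    rw [he] at this
    exact this.symm
  · intro p h
    have hps : pmap σ (pmap (invSig σ) p.1) = p.1 := pmap_invSig' σ p.1
    have h' : b.tree.isLf (pmap σ (pmap (invSig σ) p.1)) := by rw [hps]; exact p.2
    have := hlab ⟨pmap (invSig σ) p.1, h⟩ h'
    have he : (⟨pmap σ (pmap (invSig σ) p.1), h'⟩ : {q : List Bool // b.tree.isLf q}) = p :=
      Subtype.ext hps
    rw [he] at this
    exact this.symm

lemma phyloRel_trans {a b c : PhyloT} (h1 : PhyloRel a b) (h2 : PhyloRel b c) :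
    PhyloRel a c := by
  obtain ⟨σ, ht1, hr1, hl1⟩ := h1
  obtain ⟨τ, ht2, hr2, hl2⟩ := h2
  refine ⟨compSig σ τ, by rw [ht2, ht1, reorient_comp], ?_, ?_⟩
  · intro p h
    have hb : b.tree.isInt (pmap σ p.1) := by
      rw [ht1]; exact isInt_reorient σ p.1 a.tree p.2
    have hc : c.tree.isInt (pmap τ (pmap σ p.1)) := by
      rw [← pmap_comp]; exact h
    have e1 := hr2 ⟨pmap σ p.1, hb⟩ hc
    have e2 := hr1 p hb
    have he : (⟨pmap (compSig σ τ) p.1, h⟩ : {q : List Bool // c.tree.isInt q})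
        = ⟨pmap τ (pmap σ p.1), hc⟩ := Subtype.ext (pmap_comp σ τ p.1)
    rw [he]
    exact e1.trans e2
  · intro p h
    have hb : b.tree.isLf (pmap σ p.1) := by
      rw [ht1]; exact isLf_reorient σ p.1 a.tree p.2
    have hc : c.tree.isLf (pmap τ (pmap σ p.1)) := by
      rw [← pmap_comp]; exact h
    have e1 := hl2 ⟨pmap σ p.1, hb⟩ hc
    have e2 := hl1 p hb
    have he : (⟨pmap (compSig σ τ) p.1, h⟩ : {q : List Bool // c.tree.isLf q})
        = ⟨pmap τ (pmap σ p.1), hc⟩ := Subtype.ext (pmap_comp σ τ p.1)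
    rw [he]
    exact e1.trans e2

lemma phyloRel_equivalence : Equivalence PhyloRel :=
  ⟨phyloRel_refl, phyloRel_symm, phyloRel_trans⟩

lemma shapeRel_refl (a : RankedOTree) : ShapeRel a a := by
  refine ⟨fun _ => false, (reorient_const_false a.1).symm, ?_⟩
  intro p h
  have he : (⟨pmap (fun _ => false) p.1, h⟩ : {q : List Bool // a.1.isInt q}) = p :=
    Subtype.ext (pmap_const_false p.1)
  rw [he]

lemma shapeRel_symm {a b : RankedOTree} (h : ShapeRel a b) : ShapeRel b a := by
  obtain ⟨σ, htree, hrank⟩ := h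
  refine ⟨invSig σ, by rw [htree, reorient_invSig], ?_⟩
  intro p h
  have hps : pmap σ (pmap (invSig σ) p.1) = p.1 := pmap_invSig' σ p.1
  have h' : b.1.isInt (pmap σ (pmap (invSig σ) p.1)) := by rw [hps]; exact p.2
  have := hrank ⟨pmap (invSig σ) p.1, h⟩ h'
  have he : (⟨pmap σ (pmap (invSig σ) p.1), h'⟩ : {q : List Bool // b.1.isInt q}) = p :=
    Subtype.ext hps
  rw [he] at this
  exact this.symm

lemma shapeRel_trans {a b c : RankedOTree} (h1 : ShapeRel a b) (h2 : ShapeRel b c) :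
    ShapeRel a c := by
  obtain ⟨σ, ht1, hr1⟩ := h1
  obtain ⟨τ, ht2, hr2⟩ := h2
  refine ⟨compSig σ τ, by rw [ht2, ht1, reorient_comp], ?_⟩
  intro p h
  have hb : b.1.isInt (pmap σ p.1) := by
    rw [ht1]; exact isInt_reorient σ p.1 a.1 p.2
  have hc : c.1.isInt (pmap τ (pmap σ p.1)) := by
    rw [← pmap_comp]; exact h
  have e1 := hr2 ⟨pmap σ p.1, hb⟩ hc
  have e2 := hr1 p hb
  have he : (⟨pmap (compSig σ τ) p.1, h⟩ : {q : List Bool // c.1.isInt q})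
      = ⟨pmap τ (pmap σ p.1), hc⟩ := Subtype.ext (pmap_comp σ τ p.1)
  rw [he]
  exact e1.trans e2

lemma shapeRel_equivalence : Equivalence ShapeRel :=
  ⟨shapeRel_refl, shapeRel_symm, shapeRel_trans⟩

end Stmt2Aux
namespace Stmt2Aux
open OTree Relation

/-! ### Cherry-swap reorientations -/

variable (t : OTree)

/-- The reorientation swapping exactly at the cherries flagged by `c`. -/
def sigC (c : {q : List Bool // OTree.isCherry t q} → Bool) : List Bool → Bool :=
  fun q => if h : OTree.isCherry t q then c ⟨q, h⟩ else false

lemma reorient_sigC (c : {q : List Bool // OTree.isCherry t q} → Bool) :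
    t.reorient (sigC t c) = t :=
  reorient_cherries t _ fun _ _ hnc => dif_neg hnc

lemma pmap_sigC_int (c : {q : List Bool // OTree.isCherry t q} → Bool)
    {p : List Bool} (hp : t.isInt p) : pmap (sigC t c) p = p :=
  pmap_fix fun q hq hne => dif_neg (not_cherry_of_proper_prefix hp hq hne)

lemma reorient_invSig_sigC (c : {q : List Bool // OTree.isCherry t q} → Bool) :
    t.reorient (invSig (sigC t c)) = t := by
  have h2 := reorient_invSig (sigC t c) t
  rwa [reorient_sigC] at h2

/-- The leaf permutation induced by swapping at the flagged cherries. -/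
def permC (c : {q : List Bool // OTree.isCherry t q} → Bool) :
    {p : List Bool // t.isLf p} ≃ {p : List Bool // t.isLf p} where
  toFun := fun x => ⟨pmap (sigC t c) x.1, by
    have h := isLf_reorient (sigC t c) x.1 t x.2
    rwa [reorient_sigC] at h⟩
  invFun := fun x => ⟨pmap (invSig (sigC t c)) x.1, by
    have h := isLf_reorient (invSig (sigC t c)) x.1 t x.2
    rwa [reorient_invSig_sigC] at h⟩
  left_inv := fun x => Subtype.ext (pmap_invSig _ x.1)
  right_inv := fun x => Subtype.ext (pmap_invSig' _ x.1)

lemma pmap_sigC_cherry (c : {q : List Bool // OTree.isCherry t q} → Bool)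
    {q : List Bool} (hq : OTree.isCherry t q) (b : Bool) :
    pmap (sigC t c) (q ++ [b]) = q ++ [xor b (c ⟨q, hq⟩)] := by
  have h1 : pmap (sigC t c) q = q :=
    pmap_fix fun r hr hne => dif_neg (not_cherry_of_proper_prefix hq.1 hr hne)
  rw [pmap_append_single q _ b h1, show sigC t c q = c ⟨q, hq⟩ from dif_pos hq]

lemma sigC_inj {c c' : {q : List Bool // OTree.isCherry t q} → Bool}
    (h : ∀ (p : List Bool), t.isLf p → pmap (sigC t c) p = pmap (sigC t c') p) :
    c = c' := by
  funext q
  obtain ⟨q, hq⟩ := q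
  have hlf : t.isLf (q ++ [true]) := cherry_child_isLf hq true
  have := h (q ++ [true]) hlf
  rw [pmap_sigC_cherry t c hq true, pmap_sigC_cherry t c' hq true] at this
  have h2 : xor true (c ⟨q, hq⟩) = xor true (c' ⟨q, hq⟩) := by simpa using this
  cases hcv : c ⟨q, hq⟩ <;> cases hcv' : c' ⟨q, hq⟩ <;> simp_all

/-- A reorientation fixing all internal positions vanishes on non-cherry internal nodes. -/
lemma sig_support {σ : List Bool → Bool} (hfix : ∀ p, t.isInt p → pmap σ p = p) :
    ∀ q, t.isInt q → ¬ OTree.isCherry t q → σ q = false := by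
  intro q hq hnc
  obtain ⟨b, hb⟩ := exists_int_child_of_not_cherry q t hq hnc
  have h1 := hfix _ hb
  rw [pmap_append_single q σ b (hfix q hq)] at h1
  have h2 : xor b (σ q) = b := by simpa using h1
  cases b <;> cases hσ : σ q <;> simp_all

/-- On leaves, a reorientation fixing all internal positions acts as a cherry swap. -/
lemma pmap_eq_sigC {σ : List Bool → Bool} (hfix : ∀ p, t.isInt p → pmap σ p = p)
    (p : List Bool) (hp : t.isLf p) :
    pmap σ p = pmap (sigC t (fun q => σ q.1)) p := by
  refine pmap_congr p _ _ fun q hq hne => ?_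
  have hqi : t.isInt q := isInt_of_prefix_isLf q t p hp hq hne
  by_cases hc : OTree.isCherry t q
  · rw [sigC, dif_pos hc]
  · rw [sig_support t hfix q hqi hc, sigC, dif_neg hc]

end Stmt2Aux
namespace Stmt2Aux
open OTree Relation

section Main
variable (x : RankedOTree)

/-- Labelings of the fixed ranked tree shape `x`. -/
abbrev LabT := {p : List Bool // x.1.isLf p} ≃ Fin x.1.nLeaves

/-- The canonical representative with labeling `lab`. -/
def FT (lab : LabT x) : PhyloT := ⟨x.1, x.2, lab⟩

lemma FT_rel_iff (lab₁ lab₂ : LabT x) :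
    PhyloRel (FT x lab₁) (FT x lab₂) ↔
      ∃ d : {q : List Bool // OTree.isCherry x.1 q} → Bool,
        lab₂ = (permC x.1 d).symm.trans lab₁ := by
  constructor
  · rintro ⟨σ, htree, hrank, hlab⟩
    replace htree : x.1 = x.1.reorient σ := htree
    replace hrank : ∀ (p : {p : List Bool // x.1.isInt p}) (h : x.1.isInt (pmap σ p.1)),
        (x.2.rk ⟨pmap σ p.1, h⟩ : ℕ) = (x.2.rk p : ℕ) := hrank
    replace hlab : ∀ (p : {p : List Bool // x.1.isLf p}) (h : x.1.isLf (pmap σ p.1)),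
        (lab₂ ⟨pmap σ p.1, h⟩ : ℕ) = (lab₁ p : ℕ) := hlab
    have hfix : ∀ p, x.1.isInt p → pmap σ p = p := by
      intro p hp
      have h2 : x.1.isInt (pmap σ p) := by
        have := isInt_reorient σ p x.1 hp
        rwa [← htree] at this
      have e := hrank ⟨p, hp⟩ h2
      have e2 : x.2.rk ⟨pmap σ p, h2⟩ = x.2.rk ⟨p, hp⟩ := Fin.ext e
      have e3 := x.2.bij.injective e2
      exact congrArg Subtype.val e3
    refine ⟨fun q => σ q.1, ?_⟩
    have key : ∀ p' : {p : List Bool // x.1.isLf p},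
        lab₂ ((permC x.1 (fun q => σ q.1)) p') = lab₁ p' := by
      intro p'
      have hσp : pmap σ p'.1 = pmap (sigC x.1 (fun q => σ q.1)) p'.1 :=
        pmap_eq_sigC x.1 hfix p'.1 p'.2
      have hIsLf : x.1.isLf (pmap σ p'.1) := by
        have := isLf_reorient σ p'.1 x.1 p'.2
        rwa [← htree] at this
      have e := hlab p' hIsLf
      have e2 : lab₂ ⟨pmap σ p'.1, hIsLf⟩ = lab₁ p' := Fin.ext e
      have he : (permC x.1 (fun q => σ q.1)) p' = ⟨pmap σ p'.1, hIsLf⟩ :=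
        Subtype.ext hσp.symm
      rw [he, e2]
    apply Equiv.ext
    intro p
    have hpp := key ((permC x.1 (fun q => σ q.1)).symm p)
    rw [Equiv.apply_symm_apply] at hpp
    rw [hpp]
    rfl
  · rintro ⟨d, rfl⟩
    refine ⟨sigC x.1 d, (reorient_sigC x.1 d).symm, ?_, ?_⟩
    · intro p h
      have he : (⟨pmap (sigC x.1 d) p.1, h⟩ : {q : List Bool // x.1.isInt q}) = p :=
        Subtype.ext (pmap_sigC_int x.1 d p.2)
      show ((x.2.rk ⟨pmap (sigC x.1 d) p.1, h⟩ : Fin x.1.nInt) : ℕ) = (x.2.rk p : ℕ)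
      rw [he]
    · intro p h
      have he : (⟨pmap (sigC x.1 d) p.1, h⟩ : {q : List Bool // x.1.isLf q})
          = permC x.1 d p := rfl
      erw [he]
      show (((permC x.1 d).symm.trans lab₁) (permC x.1 d p) : ℕ) = (lab₁ p : ℕ)
      erw [Equiv.trans_apply, Equiv.symm_apply_apply]

lemma exists_lab (a : PhyloT) (h : ShapeRel ⟨a.tree, a.rank⟩ x) :
    ∃ lab : LabT x, PhyloRel a (FT x lab) := by
  obtain ⟨σ, ht, hrk⟩ := h
  -- ht : x.1 = a.tree.reorient σ
  have hnl : x.1.nLeaves = a.tree.nLeaves := by rw [ht, nLeaves_reorient]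
  have hfwd : ∀ p : {p : List Bool // a.tree.isLf p}, x.1.isLf (pmap σ p.1) := by
    intro p
    rw [ht]
    exact isLf_reorient σ p.1 a.tree p.2
  have hbwd : ∀ p : {p : List Bool // x.1.isLf p}, a.tree.isLf (pmap (invSig σ) p.1) := by
    rintro ⟨pv, h2⟩
    show a.tree.isLf (pmap (invSig σ) pv)
    rw [ht] at h2
    have h3 := isLf_reorient (invSig σ) pv (a.tree.reorient σ) h2
    rwa [reorient_invSig] at h3
  let E : {p : List Bool // a.tree.isLf p} ≃ {p : List Bool // x.1.isLf p} :=
    { toFun := fun p => ⟨pmap σ p.1, hfwd p⟩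
      invFun := fun p => ⟨pmap (invSig σ) p.1, hbwd p⟩
      left_inv := fun p => Subtype.ext (pmap_invSig σ p.1)
      right_inv := fun p => Subtype.ext (pmap_invSig' σ p.1) }
  refine ⟨E.symm.trans (a.lab.trans (finCongr hnl.symm)), ⟨σ, ht, hrk, ?_⟩⟩
  intro p h
  show ((finCongr hnl.symm) (a.lab (E.symm ⟨pmap σ p.1, h⟩)) : ℕ) = (a.lab p : ℕ)
  have he : E.symm ⟨pmap σ p.1, h⟩ = p := by
    apply E.injective
    apply Subtype.ext
    show pmap σ (pmap (invSig σ) (pmap σ p.1)) = pmap σ p.1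
    rw [pmap_invSig]
  rw [he]
  simp

end Main
end Stmt2Aux
open Stmt2Aux

/-- a ranked tree shape with n leaves and k cherries (represented by a ranked
oriented tree `x`) has exactly n!/2^k ranked phylogenetic trees mapping to it under the map
forgetting leaf labels (stated multiplicatively: count · 2^k = n!). -/
theorem stmt2 (x : RankedOTree) (n k : ℕ)
    (hn : x.1.nLeaves = n) (hk : x.1.nCherries = k) :
    Nat.card {c : PhyloTree // ∃ a : PhyloT, Quotient.mk (Relation.EqvGen.setoid PhyloRel) a = c ∧
        Relation.EqvGen ShapeRel ⟨a.tree, a.rank⟩ x} * 2 ^ k = n.factorial := by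
  subst hn hk
  classical
  let Flags := {q : List Bool // OTree.isCherry x.1 q} → Bool
  let fS : LabT x → {c : PhyloTree // ∃ a : PhyloT,
      Quotient.mk (Relation.EqvGen.setoid PhyloRel) a = c ∧
      Relation.EqvGen ShapeRel ⟨a.tree, a.rank⟩ x} :=
    fun lab => ⟨Quotient.mk _ (FT x lab), FT x lab, rfl, Relation.EqvGen.refl x⟩
  have hfS_iff : ∀ lab₁ lab₂ : LabT x, fS lab₁ = fS lab₂ ↔
      ∃ d : Flags, lab₂ = (permC x.1 d).symm.trans lab₁ := by
    intro lab₁ lab₂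
    rw [Subtype.ext_iff]
    show Quotient.mk _ (FT x lab₁) = Quotient.mk _ (FT x lab₂) ↔ _
    rw [Quotient.eq]
    show Relation.EqvGen PhyloRel (FT x lab₁) (FT x lab₂) ↔ _
    rw [Equivalence.eqvGen_iff phyloRel_equivalence]
    exact FT_rel_iff x lab₁ lab₂
  have hsurj : Function.Surjective fS := by
    rintro ⟨c, a, hmk, hshape⟩
    replace hshape := (Equivalence.eqvGen_iff shapeRel_equivalence).mp hshape
    obtain ⟨lab, hrel⟩ := exists_lab x a hshape
    refine ⟨lab, Subtype.ext ?_⟩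
    show Quotient.mk _ (FT x lab) = c
    rw [← hmk]
    exact (Quotient.sound (Relation.EqvGen.rel _ _ hrel)).symm
  choose g hg using hsurj
  have hH : ∀ (c : {c : PhyloTree // ∃ a : PhyloT,
      Quotient.mk (Relation.EqvGen.setoid PhyloRel) a = c ∧
      Relation.EqvGen ShapeRel ⟨a.tree, a.rank⟩ x}) (d : Flags),
      fS ((permC x.1 d).symm.trans (g c)) = c := by
    intro c d
    exact ((hfS_iff (g c) ((permC x.1 d).symm.trans (g c))).mpr ⟨d, rfl⟩).symm.trans (hg c)
  let H : ∀ c : {c : PhyloTree // ∃ a : PhyloT,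
      Quotient.mk (Relation.EqvGen.setoid PhyloRel) a = c ∧
      Relation.EqvGen ShapeRel ⟨a.tree, a.rank⟩ x},
      Flags → {lab : LabT x // fS lab = c} :=
    fun c d => ⟨(permC x.1 d).symm.trans (g c), hH c d⟩
  have hHbij : ∀ c, Function.Bijective (H c) := by
    intro c
    constructor
    · intro d d' hdd
      have h1 : (permC x.1 d).symm.trans (g c) = (permC x.1 d').symm.trans (g c) :=
        Subtype.ext_iff.mp hdd
      have h2 : ∀ p, (permC x.1 d).symm p = (permC x.1 d').symm p := by
        intro p
        have h3 : ((permC x.1 d).symm.trans (g c)) p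
            = ((permC x.1 d').symm.trans (g c)) p := by rw [h1]
        simp only [Equiv.trans_apply] at h3
        exact (g c).injective h3
      apply sigC_inj x.1
      intro p hp
      have h6 := h2 (permC x.1 d ⟨p, hp⟩)
      rw [Equiv.symm_apply_apply] at h6
      have h5 := congrArg (permC x.1 d') h6
      rw [Equiv.apply_symm_apply] at h5
      exact (congrArg Subtype.val h5).symm
    · rintro ⟨lab, hlab⟩
      obtain ⟨d, hd⟩ := (hfS_iff (g c) lab).mp ((hg c).trans hlab.symm)
      exact ⟨d, Subtype.ext hd.symm⟩
  let E := ((Equiv.sigmaFiberEquiv fS).symm.trans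
      (Equiv.sigmaCongrRight fun c => (Equiv.ofBijective (H c) (hHbij c)).symm)).trans
      (Equiv.sigmaEquivProd _ Flags)
  have hcard := Nat.card_congr E
  rw [Nat.card_prod] at hcard
  have hLab : Nat.card (LabT x) = (x.1.nLeaves).factorial := by
    rw [Nat.card_congr (Equiv.equivCongr (leafFinEquiv x.1) (Equiv.refl (Fin x.1.nLeaves))),
      Nat.card_eq_fintype_card, Fintype.card_equiv (Equiv.refl _), Fintype.card_fin]
  have hFlags : Nat.card Flags = 2 ^ x.1.nCherries := by
    rw [Nat.card_congr (Equiv.arrowCongr (cherryFinEquiv x.1) (Equiv.refl Bool)),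
      Nat.card_eq_fintype_card]
    simp
  rw [← hFlags, ← hcard, hLab]
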